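/- Let T[1..n] be a string over a linearly ordered alphabet. For every position ℓ < n that does not lie in the maximal equal-symbol run suffix of T: ℓ is S-type if and only if the suffix T[ℓ..n] is lexicographically smaller than the suffix T[ℓ+1..n], and ℓ is L-type if and only if T[ℓ..n] is lexicographically larger than T[ℓ+1..n]. Moreover, for every position ℓ < n lying in the maximal equal-symbol run suffix, T[ℓ..n] is lexicographically larger than T[ℓ+1..n] (a proper prefix is smaller). -/

import Mathlib

/-- Position `ℓ` of the string `T[1..n]` is L-type (Nong et al.'s classification):
`T[ℓ] > T[ℓ+1]`, or `T[ℓ] = T[ℓ+1]` and `ℓ+1` is L-type. -/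
def isLType {α : Type*} [LinearOrder α] (T : ℕ → α) (n ℓ : ℕ) : Prop :=
  if _h : ℓ < n then
    T (ℓ + 1) < T ℓ ∨ (T ℓ = T (ℓ + 1) ∧ isLType T n (ℓ + 1))
  else False
termination_by n - ℓ
decreasing_by omega

/-- Position `ℓ` of the string `T[1..n]` is S-type:
`T[ℓ] < T[ℓ+1]`, or `T[ℓ] = T[ℓ+1]` and `ℓ+1` is S-type. -/
def isSType {α : Type*} [LinearOrder α] (T : ℕ → α) (n ℓ : ℕ) : Prop :=
  if _h : ℓ < n then
    T ℓ < T (ℓ + 1) ∨ (T ℓ = T (ℓ + 1) ∧ isSType T n (ℓ + 1))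
  else False
termination_by n - ℓ
decreasing_by omega

/-- Position `ℓ` lies in the maximal equal-symbol run suffix of `T[1..n]`. -/
def inRunSuffix {α : Type*} (T : ℕ → α) (n ℓ : ℕ) : Prop :=
  ∀ i, ℓ ≤ i → i < n → T i = T (i + 1)

/-- Position `ℓ` of `T[1..n]` is LMS-type: `ℓ ≥ 2`, `ℓ` is S-type and `ℓ-1` is L-type. -/
def isLMS {α : Type*} [LinearOrder α] (T : ℕ → α) (n ℓ : ℕ) : Prop :=
  2 ≤ ℓ ∧ isSType T n ℓ ∧ isLType T n (ℓ - 1)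

/-- The suffix `T[ℓ..n]` of the string `T[1..n]`, as a list. -/
def suffixList {α : Type*} (T : ℕ → α) (n ℓ : ℕ) : List α :=
  (List.range (n + 1 - ℓ)).map (fun i => T (ℓ + i))


lemma suffixList_cons {α : Type*} (T : ℕ → α) (n ℓ : ℕ) (h : ℓ ≤ n) :
    suffixList T n ℓ = T ℓ :: suffixList T n (ℓ + 1) := by
  unfold suffixList
  have h1 : n + 1 - ℓ = (n - ℓ) + 1 := by omega
  have h2 : n + 1 - (ℓ + 1) = n - ℓ := by omega
  rw [h1, h2, List.range_succ_eq_map, List.map_cons, List.map_map]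
  simp only [Nat.add_zero]
  congr 1
  apply List.map_congr_left
  intro i _
  simp [Function.comp]
  congr 1
  omega

lemma suffixList_nil {α : Type*} (T : ℕ → α) (n : ℕ) :
    suffixList T n (n + 1) = [] := by
  unfold suffixList
  simp

lemma lex_head {α : Type*} [LinearOrder α] {a b : α} {as bs : List α}
    (h : List.Lex (· < ·) (a :: as) (b :: bs)) : a < b ∨ a = b := by
  cases h with
  | rel h => exact Or.inl h
  | cons h => exact Or.inr rfl

lemma lemA {α : Type*} [LinearOrder α] (T : ℕ → α) (n ℓ : ℕ) (h : ℓ ≤ n) :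
    isSType T n ℓ ↔ List.Lex (· < ·) (suffixList T n ℓ) (suffixList T n (ℓ + 1)) := by
  rcases eq_or_lt_of_le h with rfl | h
  · rw [isSType, dif_neg (lt_irrefl ℓ), suffixList_cons T ℓ ℓ le_rfl, suffixList_nil]
    simp only [false_iff]
    exact List.not_lex_nil
  · rw [isSType, dif_pos h, suffixList_cons T n ℓ h.le, suffixList_cons T n (ℓ + 1) h]
    rcases lt_trichotomy (T ℓ) (T (ℓ + 1)) with hlt | heq | hgt
    · constructor
      · intro _; exact List.Lex.rel hlt
      · intro _; exact Or.inl hlt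
    · have IH := lemA T n (ℓ + 1) h
      rw [heq, (show ∀ (a : α) (l₁ l₂ : List α), List.Lex (· < ·) (a :: l₁) (a :: l₂) ↔ List.Lex (· < ·) l₁ l₂ from fun _ _ _ => List.cons_lex_cons_iff.trans (by simp)), ← suffixList_cons T n (ℓ + 1) h]
      constructor
      · rintro (h' | ⟨_, h'⟩)
        · exact absurd h' (lt_irrefl _)
        · exact IH.1 h'
      · intro h'
        exact Or.inr ⟨rfl, IH.2 h'⟩
    · constructor
      · rintro (h' | ⟨h', _⟩)
        · exact absurd h' (not_lt.2 hgt.le)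
        · exact absurd h' (ne_of_gt hgt)
      · intro h'
        rcases lex_head h' with h'' | h''
        · exact absurd h'' (not_lt.2 hgt.le)
        · exact absurd h'' (ne_of_gt hgt)
termination_by n - ℓ
decreasing_by omega

lemma lemB {α : Type*} [LinearOrder α] (T : ℕ → α) (n ℓ : ℕ) (h : ℓ ≤ n) :
    List.Lex (· < ·) (suffixList T n (ℓ + 1)) (suffixList T n ℓ) ↔
      (isLType T n ℓ ∨ inRunSuffix T n ℓ) := by
  rcases eq_or_lt_of_le h with rfl | h
  · rw [suffixList_cons T ℓ ℓ le_rfl, suffixList_nil]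
    constructor
    · intro _; exact Or.inr (fun i h1 h2 => absurd (lt_of_le_of_lt h1 h2) (lt_irrefl ℓ))
    · intro _; exact List.Lex.nil
  · rw [isLType, dif_pos h, suffixList_cons T n ℓ h.le, suffixList_cons T n (ℓ + 1) h]
    rcases lt_trichotomy (T (ℓ + 1)) (T ℓ) with hlt | heq | hgt
    · constructor
      · intro _; exact Or.inl (Or.inl hlt)
      · intro _; exact List.Lex.rel hlt
    · have IH := lemB T n (ℓ + 1) h
      rw [← heq, (show ∀ (a : α) (l₁ l₂ : List α), List.Lex (· < ·) (a :: l₁) (a :: l₂) ↔ List.Lex (· < ·) l₁ l₂ from fun _ _ _ => List.cons_lex_cons_iff.trans (by simp)), ← suffixList_cons T n (ℓ + 1) h, IH]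
      have hrun : inRunSuffix T n ℓ ↔ inRunSuffix T n (ℓ + 1) := by
        constructor
        · intro hr i h1 h2; exact hr i (by omega) h2
        · intro hr i h1 h2
          rcases eq_or_lt_of_le h1 with rfl | h1'
          · exact heq.symm
          · exact hr i (by omega) h2
      constructor
      · rintro (h' | h')
        · exact Or.inl (Or.inr ⟨rfl, h'⟩)
        · exact Or.inr (hrun.2 h')
      · rintro ((h' | ⟨_, h'⟩) | h')
        · exact absurd h' (by rw [heq]; exact lt_irrefl _)
        · exact Or.inl h'
        · exact Or.inr (hrun.1 h')
    · constructor
      · intro h'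
        rcases lex_head h' with h'' | h''
        · exact absurd h'' (not_lt.2 hgt.le)
        · exact absurd h'' (ne_of_gt hgt)
      · rintro ((h' | ⟨h', _⟩) | h')
        · exact absurd h' (not_lt.2 hgt.le)
        · exact absurd h'.symm (ne_of_gt hgt)
        · exact absurd (h' ℓ le_rfl h) (ne_of_gt hgt).symm
termination_by n - ℓ
decreasing_by omega

/-- for `ℓ < n` outside the maximal equal-symbol run suffix, `ℓ` is S-type
iff the suffix `T[ℓ..n]` is lexicographically smaller than `T[ℓ+1..n]`, and L-type iff
it is larger; positions `ℓ < n` in the run suffix satisfy `T[ℓ..n] > T[ℓ+1..n]`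
(a proper prefix is smaller). -/
theorem stmt1 {α : Type*} [LinearOrder α] (T : ℕ → α) (n ℓ : ℕ)
    (h1 : 1 ≤ ℓ) (h2 : ℓ < n) :
    (¬ inRunSuffix T n ℓ →
      (isSType T n ℓ ↔ List.Lex (· < ·) (suffixList T n ℓ) (suffixList T n (ℓ + 1))) ∧
      (isLType T n ℓ ↔ List.Lex (· < ·) (suffixList T n (ℓ + 1)) (suffixList T n ℓ))) ∧
    (inRunSuffix T n ℓ →
      List.Lex (· < ·) (suffixList T n (ℓ + 1)) (suffixList T n ℓ)) := by
  constructor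
  · intro hnr
    refine ⟨lemA T n ℓ h2.le, ?_⟩
    constructor
    · intro hL
      exact (lemB T n ℓ h2.le).2 (Or.inl hL)
    · intro hlex
      rcases (lemB T n ℓ h2.le).1 hlex with h' | h'
      · exact h'
      · exact absurd h' hnr
  · intro hr
    exact (lemB T n ℓ h2.le).2 (Or.inr hr)
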